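/- Let φ = C₁ ∧ … ∧ C_m be a monotone 3-CNF formula with zones Z_φ and Z'_φ constructed from it. For every configuration γ' satisfying the node (Z'_φ, ∅) via a surjection h', there exists a subset γ'' ⊆ γ' satisfying the node (Z_φ, ∅) if and only if the assignment α_{γ'} falsifies at least one clause of φ. -/
import Mathlib


open scoped Classical NNReal

namespace ATAPaper

/-! ## Intervals with natural endpoints (possibly unbounded) -/

inductive NInterval where
  | cc (a b : ℕ)
  | co (a b : ℕ)
  | oc (a b : ℕ)
  | oo (a b : ℕ)
  | ci (a : ℕ)
  | oi (a : ℕ)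
deriving DecidableEq

/-- Membership of a nonnegative real in an interval. -/
def NInterval.mem (v : ℝ≥0) : NInterval → Prop
  | .cc a b => (a : ℝ≥0) ≤ v ∧ v ≤ (b : ℝ≥0)
  | .co a b => (a : ℝ≥0) ≤ v ∧ v < (b : ℝ≥0)
  | .oc a b => (a : ℝ≥0) < v ∧ v ≤ (b : ℝ≥0)
  | .oo a b => (a : ℝ≥0) < v ∧ v < (b : ℝ≥0)
  | .ci a => (a : ℝ≥0) ≤ v
  | .oi a => (a : ℝ≥0) < v

/-- The largest constant appearing in an interval. -/
def NInterval.bound : NInterval → ℕ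
  | .cc a b | .co a b | .oc a b | .oo a b => max a b
  | .ci a | .oi a => a

/-! ## Transition formulas `Φ(Q)` with reset `x.φ` and deactivation `x̄.φ` -/

inductive TF (Q : Type*) where
  | tt
  | ff
  | loc (q : Q)
  | guard (I : NInterval)
  | and (φ ψ : TF Q)
  | or (φ ψ : TF Q)
  | reset (φ : TF Q)
  | deact (φ : TF Q)

/-- A state of a 1-ATA is a location together with a clock value which is
either inactive (`none` = ⊥) or a nonnegative real.  A configuration is a
finite set of states. -/
abbrev Config (Q : Type*) := Finset (Q × Option ℝ≥0)

section BasicDefs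

variable {Q A : Type*}

/-- `M ⊨_v φ`. -/
def TF.sat (M : Config Q) : TF Q → Option ℝ≥0 → Prop
  | .tt, _ => True
  | .ff, _ => False
  | .loc q, v => (q, v) ∈ M
  | .guard I, v => v = none ∨ ∃ r, v = some r ∧ I.mem r
  | .and φ ψ, v => φ.sat M v ∧ ψ.sat M v
  | .or φ ψ, v => φ.sat M v ∨ ψ.sat M v
  | .reset φ, _ => φ.sat M (some 0)
  | .deact φ, _ => φ.sat M none

/-- `M` is a minimal model of `φ` on `v`. -/
def MinModel (M : Config Q) (v : Option ℝ≥0) (φ : TF Q) : Prop :=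
  φ.sat M v ∧ ∀ M' ⊂ M, ¬ φ.sat M' v

/-- The disjuncts of a formula (assumed to be in disjunctive normal form). -/
def TF.disjuncts : TF Q → List (TF Q)
  | .or φ ψ => φ.disjuncts ++ ψ.disjuncts
  | φ => [φ]

/-- The intervals occurring (anywhere) in a transition formula. -/
def TF.guards : TF Q → List NInterval
  | .guard I => [I]
  | .and φ ψ | .or φ ψ => φ.guards ++ ψ.guards
  | .reset φ | .deact φ => φ.guards
  | _ => []

/-! ## One-clock alternating timed automata with deactivation -/

structure OneATA (Q A : Type*) where
  init : Q
  final : Set Q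
  delta : Q → A → Option (TF Q)

/-- `C` is one of the disjuncts of `δ(q,a)`. -/
def OneATA.isTarget (𝒜 : OneATA Q A) (q : Q) (a : A) (C : TF Q) : Prop :=
  ∃ φ, 𝒜.delta q a = some φ ∧ C ∈ φ.disjuncts

/-- Time elapse on a configuration: add `d` to every active value, keep `⊥`. -/
noncomputable def Config.delay (γ : Config Q) (d : ℝ≥0) : Config Q :=
  γ.image (fun s => (s.1, s.2.map (· + d)))

/-- Discrete transition `γ →^{a,C} γ'` where the target `χ` assigns to each
state of `γ` a disjunct of the corresponding transition formula. -/
def OneATA.DStep (𝒜 : OneATA Q A) (γ : Config Q) (a : A)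
    (χ : Q × Option ℝ≥0 → TF Q) (γ' : Config Q) : Prop :=
  (∀ s ∈ γ, 𝒜.isTarget s.1 a (χ s)) ∧
  ∃ Mo : Q × Option ℝ≥0 → Config Q,
    (∀ s ∈ γ, MinModel (Mo s) s.2 (χ s)) ∧ γ' = γ.biUnion Mo

/-- Combined transition `γ →^{d,a,C} γ'`. -/
def OneATA.Step (𝒜 : OneATA Q A) (γ : Config Q) (d : ℝ≥0) (a : A)
    (χ : Q × Option ℝ≥0 → TF Q) (γ' : Config Q) : Prop :=
  𝒜.DStep (γ.delay d) a χ γ'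

/-- A configuration is accepting if all its locations are accepting. -/
def OneATA.AcceptingCfg (𝒜 : OneATA Q A) (γ : Config Q) : Prop :=
  ∀ s ∈ γ, s.1 ∈ 𝒜.final

/-- Accepting runs on (finite) timed words. -/
inductive OneATA.AccRun (𝒜 : OneATA Q A) : Config Q → List (ℝ≥0 × A) → Prop
  | nil {γ} : 𝒜.AcceptingCfg γ → 𝒜.AccRun γ []
  | cons {γ γ' : Config Q} {d : ℝ≥0} {a : A} {w : List (ℝ≥0 × A)}
      (χ : Q × Option ℝ≥0 → TF Q) :
      𝒜.Step γ d a χ γ' → 𝒜.AccRun γ' w → 𝒜.AccRun γ ((d, a) :: w)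

/-- The language of a 1-ATA. -/
def OneATA.Lang (𝒜 : OneATA Q A) : Set (List (ℝ≥0 × A)) :=
  {w | 𝒜.AccRun {(𝒜.init, some 0)} w}

/-- Reachability between configurations by timed and discrete transitions. -/
inductive OneATA.Reach (𝒜 : OneATA Q A) : Config Q → Config Q → Prop
  | refl (γ) : 𝒜.Reach γ γ
  | delay {γ γ'} (d : ℝ≥0) : 𝒜.Reach γ γ' → 𝒜.Reach γ (γ'.delay d)
  | step {γ γ' γ''} (a : A) (χ) : 𝒜.Reach γ γ' → 𝒜.DStep γ' a χ γ'' → 𝒜.Reach γ γ''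

/-- The width of a configuration: the number of active states. -/
noncomputable def Config.width (γ : Config Q) : ℕ :=
  (γ.filter (fun s => s.2 ≠ none)).card

/-- The 1-ATA has width at most `k`. -/
def OneATA.WidthBounded (𝒜 : OneATA Q A) (k : ℕ) : Prop :=
  ∀ γ, 𝒜.Reach {(𝒜.init, some 0)} γ → γ.width ≤ k

/-- All constants appearing in the automaton are at most `M`. -/
def OneATA.BoundedBy (𝒜 : OneATA Q A) (M : ℕ) : Prop :=
  ∀ q a φ, 𝒜.delta q a = some φ → ∀ I ∈ φ.guards, I.bound ≤ M

/-! ## Region equivalence and entailment on configurations -/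

/-- `γ ≃_M γ'` via the bijection `h`. -/
def RegionEquivWith (M : ℕ) (γ γ' : Config Q)
    (h : Q × Option ℝ≥0 → Q × Option ℝ≥0) : Prop :=
  Set.BijOn h ↑γ ↑γ' ∧
  (∀ s ∈ γ, (h s).1 = s.1) ∧
  (∀ s ∈ γ, ((h s).2 = none ↔ s.2 = none)) ∧
  (∀ s ∈ γ, ∀ r r', s.2 = some r → (h s).2 = some r' →
    ((r ≤ (M : ℝ≥0)) ↔ (r' ≤ (M : ℝ≥0))) ∧
    (r ≤ (M : ℝ≥0) →
      (⌊(r : ℝ)⌋ = ⌊(r' : ℝ)⌋ ∧ (Int.fract (r : ℝ) = 0 ↔ Int.fract (r' : ℝ) = 0)))) ∧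
  (∀ s₁ ∈ γ, ∀ s₂ ∈ γ, ∀ r₁ r₂ r₁' r₂',
    s₁.2 = some r₁ → s₂.2 = some r₂ → (h s₁).2 = some r₁' → (h s₂).2 = some r₂' →
    r₁ ≤ (M : ℝ≥0) → r₂ ≤ (M : ℝ≥0) →
    (Int.fract (r₁ : ℝ) ≤ Int.fract (r₂ : ℝ) ↔ Int.fract (r₁' : ℝ) ≤ Int.fract (r₂' : ℝ)))

/-- Region equivalence `γ ≃_M γ'`. -/
def RegionEquiv (M : ℕ) (γ γ' : Config Q) : Prop := ∃ h, RegionEquivWith M γ γ' h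

/-- Configuration entailment `γ ⊨_M γ'` : some subset of `γ'` is region equivalent
to `γ`. -/
def CfgEntails (M : ℕ) (γ γ' : Config Q) : Prop :=
  ∃ γ'' ⊆ γ', RegionEquiv M γ γ''

end BasicDefs


/-! ## MTL (negation normal form) -/

inductive MTL (A : Type*) where
  | atom (a : A)
  | natom (a : A)
  | conj (φ ψ : MTL A)
  | disj (φ ψ : MTL A)
  | next (I : NInterval) (φ : MTL A)
  | untl (I : NInterval) (φ ψ : MTL A)

section MTLDefs

variable {A : Type*}

/-- Accumulated time `Σ_{c=1}^{p} d_c` of the first `p` letters of a timed word. -/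
def twtime (w : List (ℝ≥0 × A)) (p : ℕ) : ℝ≥0 := ((w.take p).map Prod.fst).sum

/-- `(w, i) ⊨ φ` (positions are 0-based). -/
def MTL.holdsAt (w : List (ℝ≥0 × A)) : MTL A → ℕ → Prop
  | .atom a, i => ∃ h : i < w.length, (w.get ⟨i, h⟩).2 = a
  | .natom a, i => ∃ h : i < w.length, (w.get ⟨i, h⟩).2 ≠ a
  | .conj φ ψ, i => φ.holdsAt w i ∧ ψ.holdsAt w i
  | .disj φ ψ, i => φ.holdsAt w i ∨ ψ.holdsAt w i
  | .next I φ, i => ∃ h : i + 1 < w.length, φ.holdsAt w (i + 1) ∧ I.mem (w.get ⟨i + 1, h⟩).1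
  | .untl I φ ψ, i => ∃ k, i ≤ k ∧ k < w.length ∧ ψ.holdsAt w k ∧
      I.mem (twtime w (k + 1) - twtime w (i + 1)) ∧
      ∀ j, i ≤ j → j < k → φ.holdsAt w j

/-- The language of an MTL formula (`w ⊨ φ` iff `φ` holds at the first position). -/
def MTL.Lang (φ : MTL A) : Set (List (ℝ≥0 × A)) := {w | φ.holdsAt w 0}

/-- Pure LTL formulas: every interval is `[0, ∞)`. -/
def MTL.isPure : MTL A → Bool
  | .atom _ | .natom _ => true
  | .conj φ ψ | .disj φ ψ => φ.isPure && ψ.isPure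
  | .next I φ => decide (I = NInterval.ci 0) && φ.isPure
  | .untl I φ ψ => decide (I = NInterval.ci 0) && φ.isPure && ψ.isPure

/-- The subformulas of an MTL formula. -/
def MTL.subfs : MTL A → List (MTL A)
  | .atom a => [.atom a]
  | .natom a => [.natom a]
  | .conj φ ψ => .conj φ ψ :: (φ.subfs ++ ψ.subfs)
  | .disj φ ψ => .disj φ ψ :: (φ.subfs ++ ψ.subfs)
  | .next I φ => .next I φ :: φ.subfs
  | .untl I φ ψ => .untl I φ ψ :: (φ.subfs ++ ψ.subfs)

/-- One-sided MTL: in every Until, the left argument is a pure LTL formula. -/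
def MTL.oneSided : MTL A → Prop
  | .atom _ | .natom _ => True
  | .conj φ ψ | .disj φ ψ => φ.oneSided ∧ ψ.oneSided
  | .next _ φ => φ.oneSided
  | .untl _ φ ψ => φ.isPure = true ∧ ψ.oneSided

/-! ## The MTL-to-1-ATA construction with deactivation -/

/-- Locations of the constructed automaton: the initial location `φ_init`,
locations for formulas (in particular Until subformulas and `φ` itself), and
locations `(X_I ψ)ʳ`. -/
inductive MLoc (A : Type*) where
  | start
  | form (ψ : MTL A)
  | nextr (I : NInterval) (ψ : MTL A)

/-- Prefix `x̄.` if `ψ` is pure LTL, and nothing otherwise. -/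
def barP (ψ : MTL A) (φ : TF (MLoc A)) : TF (MLoc A) :=
  if ψ.isPure then .deact φ else φ

/-- Prefix `x̄.` if `ψ` is pure LTL, and `x.` otherwise. -/
def rhoP (ψ : MTL A) (φ : TF (MLoc A)) : TF (MLoc A) :=
  if ψ.isPure then .deact φ else .reset φ

variable [DecidableEq A]

/-- The transition formula `δ(ψ, a)` for subformulas `ψ`. -/
def dform : MTL A → A → TF (MLoc A)
  | .atom b, a => if b = a then .tt else .ff
  | .natom b, a => if b = a then .ff else .tt
  | .conj φ ψ, a => .and (barP φ (dform φ a)) (barP ψ (dform ψ a))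
  | .disj φ ψ, a => .or (barP φ (dform φ a)) (barP ψ (dform ψ a))
  | .next I ψ, _ => .reset (.loc (.nextr I ψ))
  | .untl I φ ψ, a =>
      .or (.and (rhoP ψ (dform ψ a)) (.guard I))
          (.and (rhoP φ (dform φ a)) (.loc (.form (.untl I φ ψ))))

/-- The transition function of the constructed automaton `A'_φ`. -/
def mlocDelta (φ₀ : MTL A) : MLoc A → A → Option (TF (MLoc A))
  | .start, a => some (rhoP φ₀ (dform φ₀ a))
  | .form ψ, a => some (dform ψ a)
  | .nextr I ψ, a => some (.and (.guard I) (rhoP ψ (dform ψ a)))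

/-- The 1-ATA `A'_φ` constructed from an MTL formula `φ`:
initial location `φ_init`, no accepting locations. -/
def ataOf (φ : MTL A) : OneATA (MLoc A) A :=
  { init := .start, final := ∅, delta := mlocDelta φ }

end MTLDefs

section KB
variable {A : Type*}
/-- The recursive width bound `k_ψ`. -/
def kBound : MTL A → ℕ
  | .atom _ | .natom _ => 1
  | .conj φ ψ => if (MTL.conj φ ψ).isPure then 1 else kBound φ + kBound ψ
  | .disj φ ψ => if (MTL.disj φ ψ).isPure then 1 else max (kBound φ) (kBound ψ)
  | .next I φ => if (MTL.next I φ).isPure then 1 else kBound φ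
  | .untl I φ ψ => if (MTL.untl I φ ψ).isPure then 1 else kBound ψ
end KB


/-! ## Zones (variables `x_{q,i}`), nodes and their configuration semantics -/

section ZoneDefs

variable {Q A : Type*}

/-- A (semantic) zone: a finite set of variables `x_{q,i}` together with the
set of valuations satisfying its constraints. -/
structure SemZone (Q : Type*) where
  vars : Finset (Q × ℕ)
  val : ((Q × ℕ) → ℝ≥0) → Prop

/-- `γ` satisfies the node `(Z, IA)` via the surjection `h`. -/
def NodeSatVia (Z : SemZone Q) (IA : Finset (Q × ℕ)) (γ : Config Q)
    (h : Q × ℕ → Q × Option ℝ≥0) : Prop :=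
  (∀ y ∈ Z.vars ∪ IA, (h y).1 = y.1) ∧
  (∀ y ∈ Z.vars ∪ IA, h y ∈ γ) ∧
  (∀ s ∈ γ, ∃ y ∈ Z.vars ∪ IA, h y = s) ∧
  (∀ y ∈ IA, (h y).2 = none) ∧
  ∃ ν : (Q × ℕ) → ℝ≥0, (∀ y ∈ Z.vars, (h y).2 = some (ν y)) ∧ Z.val ν

/-- `γ ∈ ⟦(Z, IA)⟧`. -/
def NodeSat (Z : SemZone Q) (IA : Finset (Q × ℕ)) (γ : Config Q) : Prop :=
  ∃ h, NodeSatVia Z IA γ h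

/-- The special empty node `(Z_∅, {})`, satisfied exactly by the empty
configuration. -/
def emptySemZone {Q : Type*} : SemZone Q := ⟨∅, fun _ => True⟩

/-- The initial node `((x_{q₀,1} = 0), ∅)`. -/
def initSemZone (𝒜 : OneATA Q A) : SemZone Q :=
  ⟨{(𝒜.init, 1)}, fun ν => ν (𝒜.init, 1) = 0⟩

/-! ### Simple clauses and the successor computation -/

/-- A clause is a conjunction of atoms of the form `true`, `false`, `q`, `I`,
`x.q`, `x̄.q`. -/
def TF.isSimpleConj : TF Q → Bool
  | .tt => true
  | .ff => true
  | .loc _ => true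
  | .guard _ => true
  | .reset (.loc _) => true
  | .deact (.loc _) => true
  | .and φ ψ => φ.isSimpleConj && ψ.isSimpleConj
  | _ => false

/-- Every transition formula of the automaton is in disjunctive normal form. -/
def OneATA.normalized (𝒜 : OneATA Q A) : Prop :=
  ∀ q a φ, 𝒜.delta q a = some φ → ∀ C ∈ φ.disjuncts, C.isSimpleConj = true

/-- The interval atoms of a clause. -/
def TF.topGuards : TF Q → List NInterval
  | .guard I => [I]
  | .and φ ψ => φ.topGuards ++ ψ.topGuards
  | _ => []

/-- The location atoms `q` of a clause. -/
def TF.atomLocs : TF Q → List Q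
  | .loc q => [q]
  | .and φ ψ => φ.atomLocs ++ ψ.atomLocs
  | _ => []

/-- The reset atoms `x.q` of a clause. -/
def TF.resetLocs : TF Q → List Q
  | .reset (.loc q) => [q]
  | .and φ ψ => φ.resetLocs ++ ψ.resetLocs
  | _ => []

/-- The deactivation atoms `x̄.q` of a clause. -/
def TF.deactLocs : TF Q → List Q
  | .deact (.loc q) => [q]
  | .and φ ψ => φ.deactLocs ++ ψ.deactLocs
  | _ => []

/-- The inactive variable set of the successor node: `x'_{q,0}` for every atom
`x̄.q`, and for every atom `q` of a clause of an inactive variable. -/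
noncomputable def succIA (Z : SemZone Q) (IA : Finset (Q × ℕ))
    (T : Q × ℕ → TF Q) : Finset (Q × ℕ) :=
  ((Z.vars ∪ IA).biUnion fun y => ((T y).deactLocs.toFinset).image fun q => (q, 0)) ∪
  (IA.biUnion fun y => ((T y).atomLocs.toFinset).image fun q => (q, 0))

/-- Number of active variables whose clause contains the atom `q`. -/
noncomputable def copyCount (Z : SemZone Q) (T : Q × ℕ → TF Q) (q : Q) : ℕ :=
  (Z.vars.filter fun y => q ∈ (T y).atomLocs).card

/-- The active variable set of the successor node: `x'_{q,1}` for resets, and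
fresh variables `x'_{q,ℓ}` with `2 ≤ ℓ` (smallest free indices) for atoms `q`
of clauses of active variables. -/
noncomputable def succVars (Z : SemZone Q) (IA : Finset (Q × ℕ))
    (T : Q × ℕ → TF Q) : Finset (Q × ℕ) :=
  (((Z.vars ∪ IA).biUnion fun y => (T y).resetLocs.toFinset).image fun q => (q, 1)) ∪
  ((Z.vars.biUnion fun y => (T y).atomLocs.toFinset).biUnion fun q =>
    (Finset.Icc 2 (copyCount Z T q + 1)).image fun i => (q, i))

/-- The successor computation on nodes:  time elapse, guard intersection,
reset/deactivation with fresh variables, and renaming (canonicalization is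
semantically transparent).  `T` assigns to every variable of the node a
disjunct of the transition formula of its location on the letter `a`.  If a
chosen disjunct is `false`, the target is discarded; if all chosen disjuncts
are `true`, the successor is the special empty node. -/
def Succ (𝒜 : OneATA Q A) (Z : SemZone Q) (IA : Finset (Q × ℕ)) (a : A)
    (T : Q × ℕ → TF Q) (Z' : SemZone Q) (IA' : Finset (Q × ℕ)) : Prop :=
  (∀ y ∈ Z.vars ∪ IA, 𝒜.isTarget y.1 a (T y)) ∧
  (∀ y ∈ Z.vars ∪ IA, T y ≠ TF.ff) ∧
  ((∀ y ∈ Z.vars ∪ IA, T y = TF.tt) → (Z' = emptySemZone ∧ IA' = ∅)) ∧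
  ((¬ ∀ y ∈ Z.vars ∪ IA, T y = TF.tt) →
    IA' = succIA Z IA T ∧
    Z'.vars = succVars Z IA T ∧
    ∃ g : (Q × ℕ) → Q → ℕ,
      (∀ y ∈ Z.vars, ∀ q ∈ (T y).atomLocs, 2 ≤ g y q ∧ g y q ≤ copyCount Z T q + 1) ∧
      (∀ y₁ ∈ Z.vars, ∀ y₂ ∈ Z.vars, ∀ q, q ∈ (T y₁).atomLocs → q ∈ (T y₂).atomLocs →
        g y₁ q = g y₂ q → y₁ = y₂) ∧
      Z'.val = fun ν' => ∃ (ν : (Q × ℕ) → ℝ≥0) (d : ℝ≥0), Z.val ν ∧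
        (∀ y ∈ Z.vars, ∀ I ∈ (T y).topGuards, I.mem (ν y + d)) ∧
        (∀ y ∈ Z.vars ∪ IA, ∀ q ∈ (T y).resetLocs, ν' (q, 1) = 0) ∧
        (∀ y ∈ Z.vars, ∀ q ∈ (T y).atomLocs, ν' (q, g y q) = ν y + d))

/-- Time elapse on a single state. -/
noncomputable def stDelay (s : Q × Option ℝ≥0) (d : ℝ≥0) : Q × Option ℝ≥0 :=
  (s.1, s.2.map (· + d))

/-- `γ →^{d,a,(C₁,…,C_m)} γ'` where the disjuncts chosen in the step correspond,
via a surjection witnessing `γ ∈ ⟦(Z,IA)⟧`, to the target tuple `T` of the node. -/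
def StepMatching (𝒜 : OneATA Q A) (Z : SemZone Q) (IA : Finset (Q × ℕ))
    (γ : Config Q) (d : ℝ≥0) (a : A) (T : Q × ℕ → TF Q) (γ' : Config Q) : Prop :=
  ∃ h χ, NodeSatVia Z IA γ h ∧
    (∀ y ∈ Z.vars ∪ IA, χ (stDelay (h y) d) = T y) ∧
    𝒜.Step γ d a χ γ'

/-- Reachability in the zone graph. -/
inductive ZReach (𝒜 : OneATA Q A) :
    SemZone Q × Finset (Q × ℕ) → SemZone Q × Finset (Q × ℕ) → Prop
  | refl (n) : ZReach 𝒜 n n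
  | step {n₁ n₂ n₃} (a : A) (T) :
      ZReach 𝒜 n₁ n₂ → Succ 𝒜 n₂.1 n₂.2 a T n₃.1 n₃.2 → ZReach 𝒜 n₁ n₃

/-- A node is accepting if the locations of all its variables are accepting. -/
def AccNode (𝒜 : OneATA Q A) (Z : SemZone Q) (IA : Finset (Q × ℕ)) : Prop :=
  ∀ y ∈ Z.vars ∪ IA, y.1 ∈ 𝒜.final

/-! ### Entailment between nodes -/

/-- Node entailment `(Z,IA) ⊨_M (Z',IA')`. -/
def NodeEntails (M : ℕ) (Z : SemZone Q) (IA : Finset (Q × ℕ))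
    (Z' : SemZone Q) (IA' : Finset (Q × ℕ)) : Prop :=
  ∀ γ', NodeSat Z' IA' γ' → ∃ γ, NodeSat Z IA γ ∧ CfgEntails M γ γ'

/-- Classical region equivalence between valuations over the variable set `V`. -/
def ValRegEquiv (M : ℕ) (V : Finset (Q × ℕ)) (u u' : (Q × ℕ) → ℝ≥0) : Prop :=
  (∀ y ∈ V, ((u y ≤ (M : ℝ≥0)) ↔ (u' y ≤ (M : ℝ≥0))) ∧
    (u y ≤ (M : ℝ≥0) →
      (⌊(u y : ℝ)⌋ = ⌊(u' y : ℝ)⌋ ∧ (Int.fract (u y : ℝ) = 0 ↔ Int.fract (u' y : ℝ) = 0)))) ∧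
  (∀ y ∈ V, ∀ z ∈ V, u y ≤ (M : ℝ≥0) → u z ≤ (M : ℝ≥0) →
    (Int.fract (u y : ℝ) ≤ Int.fract (u z : ℝ) ↔
      Int.fract (u' y : ℝ) ≤ Int.fract (u' z : ℝ)))

/-- The bounded entailment check `(Z,IA) ⊨ᵇ_M (Z',IA')`, for zones over the same
variables, using the identity correspondence of variables. -/
def BoundedEntails (M : ℕ) (Z : SemZone Q) (IA : Finset (Q × ℕ))
    (Z' : SemZone Q) (IA' : Finset (Q × ℕ)) : Prop :=
  IA ⊆ IA' ∧ ∀ u', Z'.val u' → ∃ u, Z.val u ∧ ValRegEquiv M Z.vars u u'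

/-! ### Syntactic zones -/

/-- Comparison relations in zone constraints. -/
inductive ZRel | lt | le | gt | ge

def ZRel.holds : ZRel → ℝ → ℝ → Prop
  | .lt, x, y => x < y
  | .le, x, y => x ≤ y
  | .gt, x, y => x > y
  | .ge, x, y => x ≥ y

/-- A zone constraint: `y ∼ k` or `y − x ∼ k` with `k ∈ ℤ`. -/
inductive ZConstr (Q : Type*) where
  | single (y : Q × ℕ) (r : ZRel) (k : ℤ)
  | diff (y x : Q × ℕ) (r : ZRel) (k : ℤ)

def ZConstr.holds (ν : (Q × ℕ) → ℝ≥0) : ZConstr Q → Prop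
  | .single y r k => r.holds (ν y : ℝ) (k : ℝ)
  | .diff y x r k => r.holds ((ν y : ℝ) - (ν x : ℝ)) (k : ℝ)

/-- The variables occurring in a constraint. -/
def ZConstr.varsIn : ZConstr Q → List (Q × ℕ)
  | .single y _ _ => [y]
  | .diff y x _ _ => [y, x]

/-- A (syntactic) zone: a finite set of variables and a finite conjunction of
constraints. -/
structure Zone (Q : Type*) where
  vars : Finset (Q × ℕ)
  constrs : List (ZConstr Q)

def Zone.satBy (Z : Zone Q) (ν : (Q × ℕ) → ℝ≥0) : Prop :=
  ∀ c ∈ Z.constrs, c.holds ν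

/-- Constraints only mention variables of the zone. -/
def Zone.wf (Z : Zone Q) : Prop :=
  ∀ c ∈ Z.constrs, ∀ v ∈ c.varsIn, v ∈ Z.vars

/-- The semantic zone of a syntactic zone. -/
def Zone.toSem (Z : Zone Q) : SemZone Q := ⟨Z.vars, Z.satBy⟩

/-! ### The `N'_r` sets for the entailment check -/

/-- Location preserving one-to-one mapping from `Var(Z)` to `Var(Z')`. -/
def LocPresInj (Z Z' : Zone Q) (r : Q × ℕ → Q × ℕ) : Prop :=
  Set.InjOn r ↑Z.vars ∧ (∀ y ∈ Z.vars, r y ∈ Z'.vars) ∧ ∀ y ∈ Z.vars, (r y).1 = y.1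

/-- `γ' ∈ N'_r` : `γ'` satisfies `(Z', IA')` via a surjection whose induced
valuation, transported back along `r`, is region equivalent to no valuation
satisfying `Z`. -/
def InNr (M : ℕ) (Z Z' : Zone Q) (IA' : Finset (Q × ℕ))
    (r : Q × ℕ → Q × ℕ) (γ' : Config Q) : Prop :=
  ∃ (h' : Q × ℕ → Q × Option ℝ≥0) (ν' : (Q × ℕ) → ℝ≥0),
    (∀ y ∈ Z'.vars ∪ IA', (h' y).1 = y.1) ∧
    (∀ y ∈ Z'.vars ∪ IA', h' y ∈ γ') ∧
    (∀ s ∈ γ', ∃ y ∈ Z'.vars ∪ IA', h' y = s) ∧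
    (∀ y ∈ IA', (h' y).2 = none) ∧
    (∀ y ∈ Z'.vars, (h' y).2 = some (ν' y)) ∧
    Z'.satBy ν' ∧
    ∀ ν, Z.satBy ν → ¬ ValRegEquiv M Z.vars ν (fun y => ν' (r y))

end ZoneDefs


/-! ## The zones `Z_φ` and `Z'_φ` constructed from a monotone 3-CNF formula -/

/-- The two locations `q_x` and `q_y`. -/
inductive XY | qx | qy
deriving DecidableEq

/-- The zone variables used in the reduction, for a formula with `m` clauses:
`px_j, py_j, nx_j, ny_j` (dummy clauses), `x^i_j, y^i_j` (clause literals) for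
`Z'_φ`, and `x⁺_j, y⁺_j, x⁻_j, y⁻_j` for `Z_φ`. -/
inductive MVar (m : ℕ) where
  | px (j : Fin 3)
  | py (j : Fin 3)
  | nx (j : Fin 3)
  | ny (j : Fin 3)
  | xc (i : Fin m) (j : Fin 3)
  | yc (i : Fin m) (j : Fin 3)
  | xp (j : Fin 3)
  | yp (j : Fin 3)
  | xm (j : Fin 3)
  | ym (j : Fin 3)
deriving DecidableEq

section Mono

variable {m : ℕ}

/-- The location of each variable. -/
def MVar.loc : MVar m → XY
  | .px _ | .nx _ | .xc _ _ | .xp _ | .xm _ => .qx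
  | .py _ | .ny _ | .yc _ _ | .yp _ | .ym _ => .qy

def MVar.inZ : MVar m → Prop
  | .xp _ | .yp _ | .xm _ | .ym _ => True
  | _ => False

/-- The variables of `Z_φ`. -/
def ZVars (m : ℕ) : Set (MVar m) := {y | y.inZ}

/-- The variables of `Z'_φ`. -/
def Z'Vars (m : ℕ) : Set (MVar m) := {y | ¬ y.inZ}

/-- `γ` satisfies the node `(Z, ∅)` (zone given semantically by the predicate
`P` on valuations, over the variable set `V`) via the surjection `h`. -/
def MSat (V : Set (MVar m)) (P : (MVar m → ℝ≥0) → Prop) (γ : Config XY)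
    (h : MVar m → XY × Option ℝ≥0) : Prop :=
  (∀ y ∈ V, (h y).1 = y.loc) ∧
  (∀ y ∈ V, h y ∈ γ) ∧
  (∀ s ∈ γ, ∃ y ∈ V, h y = s) ∧
  ∃ ν : MVar m → ℝ≥0, (∀ y ∈ V, (h y).2 = some (ν y)) ∧ P ν

/-- The constraints of the zone `Z_φ` (with `k` positive clauses and `m`
clauses in total). -/
def ZphiSat (m k : ℕ) (ν : MVar m → ℝ≥0) : Prop :=
  (∀ j : Fin 3, 0 ≤ (ν (.yp j) : ℝ) - ν (.xp j) ∧ (ν (.yp j) : ℝ) - ν (.xp j) ≤ 1) ∧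
  (∀ j : Fin 3, 1 < (ν (.ym j) : ℝ) - ν (.xm j) ∧ (ν (.ym j) : ℝ) - ν (.xm j) ≤ 2) ∧
  (∀ j : Fin 2, 1 ≤ (ν (.xp j.succ) : ℝ) - ν (.yp j.castSucc) ∧
      (ν (.xp j.succ) : ℝ) - ν (.yp j.castSucc) ≤ 5) ∧
  (∀ j : Fin 2, 1 ≤ (ν (.xm j.succ) : ℝ) - ν (.ym j.castSucc) ∧
      (ν (.xm j.succ) : ℝ) - ν (.ym j.castSucc) ≤ 5) ∧
  ((ν (.yp 2) : ℝ) < 14 * ((k : ℝ) + 1) - 2) ∧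
  ((ν (.xm 0) : ℝ) > 14 * ((k : ℝ) + 1) - 2) ∧
  ((ν (.ym 2) : ℝ) - ν (.xp 0) < 14 * ((m : ℝ) + 2) - 6)

/-- The constraints of the zone `Z'_φ`, for a monotone 3-CNF formula whose
`i`-th clause has literals on the propositional variables `lits i 0`,
`lits i 1`, `lits i 2`. -/
def Z'phiSat (m : ℕ) {PV : Type*} (lits : Fin m → Fin 3 → PV)
    (ν : MVar m → ℝ≥0) : Prop :=
  (∀ j : Fin 3, (ν (.px j) : ℝ) = 3 * (j : ℕ) ∧ (ν (.py j) : ℝ) = 3 * (j : ℕ)) ∧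
  (∀ j : Fin 3, (ν (.nx j) : ℝ) = 14 * ((m : ℝ) + 1) + 3 * (j : ℕ) ∧
      (ν (.ny j) : ℝ) = 14 * ((m : ℝ) + 1) + 3 * (j : ℕ) + 2) ∧
  (∀ (i : Fin m) (j : Fin 3),
      14 * ((i : ℕ) + 1 : ℝ) + 3 * (j : ℕ) ≤ (ν (.xc i j) : ℝ) ∧
      (ν (.xc i j) : ℝ) ≤ 14 * ((i : ℕ) + 1 : ℝ) + 3 * (j : ℕ) + 2 ∧
      14 * ((i : ℕ) + 1 : ℝ) + 3 * (j : ℕ) ≤ (ν (.yc i j) : ℝ) ∧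
      (ν (.yc i j) : ℝ) ≤ 14 * ((i : ℕ) + 1 : ℝ) + 3 * (j : ℕ) + 2 ∧
      (ν (.xc i j) : ℝ) ≤ (ν (.yc i j) : ℝ)) ∧
  (∀ (i i' : Fin m) (j j' : Fin 3), lits i j = lits i' j' →
      (ν (.xc i' j') : ℝ) - ν (.xc i j) = 14 * (((i' : ℕ) : ℝ) - ((i : ℕ) : ℝ)) +
        3 * (((j' : ℕ) : ℝ) - ((j : ℕ) : ℝ)) ∧
      (ν (.yc i' j') : ℝ) - ν (.yc i j) = 14 * (((i' : ℕ) : ℝ) - ((i : ℕ) : ℝ)) +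
        3 * (((j' : ℕ) : ℝ) - ((j : ℕ) : ℝ)))

/-- The (real) value of a state of a configuration. -/
noncomputable def sval (s : XY × Option ℝ≥0) : ℝ := ((s.2.getD 0 : ℝ≥0) : ℝ)

/-- The assignment `α_{γ'}` extracted from a surjection `h'` witnessing that a
configuration satisfies `(Z'_φ, ∅)`: a propositional variable is true iff the
difference `y − x` of (one of) its literal occurrences exceeds 1. -/
def alphaOf {PV : Type*} (lits : Fin m → Fin 3 → PV)
    (h' : MVar m → XY × Option ℝ≥0) (p : PV) : Prop :=
  ∃ (i : Fin m) (j : Fin 3), lits i j = p ∧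
    1 < sval (h' (.yc i j)) - sval (h' (.xc i j))

/-- The assignment `α` falsifies clause `C_i` (clauses `C_1, …, C_k` are
positive, the rest negative): all of its literals are false. -/
def Falsifies {PV : Type*} (k : ℕ) (lits : Fin m → Fin 3 → PV)
    (α : PV → Prop) (i : Fin m) : Prop :=
  if (i : ℕ) < k then ∀ j : Fin 3, ¬ α (lits i j) else ∀ j : Fin 3, α (lits i j)

/-- The monotone 3-CNF formula is satisfiable. -/
def MonoSatisfiable {PV : Type*} (k : ℕ) (lits : Fin m → Fin 3 → PV) : Prop :=
  ∃ α : PV → Prop, ∀ i : Fin m, ¬ Falsifies k lits α i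

end Mono



section Statement17Aux

variable {m : ℕ} {PV : Type*} {lits : Fin m → Fin 3 → PV}

lemma slotLe17 {T p q : ℕ} {u v : ℝ}
    (h1 : 14*(T:ℝ)+3*(p:ℝ) ≤ u) (_h2 : u ≤ 14*(T:ℝ)+3*(p:ℝ)+2)
    (_h3 : 14*(T:ℝ)+3*(q:ℝ) ≤ v) (h4 : v ≤ 14*(T:ℝ)+3*(q:ℝ)+2)
    (h5 : u ≤ v) : p ≤ q := by
  by_contra hc
  push_neg at hc
  have hq : (q:ℝ)+1 ≤ (p:ℝ) := by exact_mod_cast hc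
  linarith

lemma blockEq17 {s t : ℕ} {u v : ℝ}
    (h1 : 14*(s:ℝ) ≤ u) (h2 : u ≤ 14*(s:ℝ)+8)
    (h3 : 14*(t:ℝ) ≤ v) (h4 : v ≤ 14*(t:ℝ)+8)
    (h5 : 0 ≤ v - u) (h6 : v - u ≤ 5) : s = t := by
  rcases lt_trichotomy s t with hh | hh | hh
  · exfalso
    have : ((s+1:ℕ):ℝ) ≤ (t:ℝ) := Nat.cast_le.mpr hh
    push_cast at this
    linarith
  · exact hh
  · exfalso
    have : ((t+1:ℕ):ℝ) ≤ (s:ℝ) := Nat.cast_le.mpr hh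
    push_cast at this
    linarith

lemma chain317 {T : ℕ} {Xv Yv : Fin 3 → ℝ}
    (hXlb : ∀ j : Fin 3, 14*(T:ℝ)+3*((j:ℕ):ℝ) ≤ Xv j)
    (hXub : ∀ j : Fin 3, Xv j ≤ 14*(T:ℝ)+3*((j:ℕ):ℝ)+2)
    (hYlb : ∀ j : Fin 3, 14*(T:ℝ)+3*((j:ℕ):ℝ) ≤ Yv j)
    (hYub : ∀ j : Fin 3, Yv j ≤ 14*(T:ℝ)+3*((j:ℕ):ℝ)+2)
    (hXY : ∀ j : Fin 3, Xv j ≤ Yv j)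
    (a0 a1 a2 b0 b1 b2 : Fin 3)
    (hp0 : Xv a0 ≤ Yv b0) (hp1 : Xv a1 ≤ Yv b1) (hp2 : Xv a2 ≤ Yv b2)
    (hg0 : Yv b0 + 1 ≤ Xv a1) (hg1 : Yv b1 + 1 ≤ Xv a2) :
    a0 = 0 ∧ a1 = 1 ∧ a2 = 2 ∧ b0 = 0 ∧ b1 = 1 ∧ b2 = 2 := by
  have l1 : (a0:ℕ) ≤ (b0:ℕ) := slotLe17 (hXlb a0) (hXub a0) (hYlb b0) (hYub b0) hp0
  have l2 : (b0:ℕ) ≤ (a1:ℕ) :=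
    slotLe17 (hYlb b0) (hYub b0) (hXlb a1) (hXub a1) (by linarith)
  have l3 : (a1:ℕ) ≤ (b1:ℕ) := slotLe17 (hXlb a1) (hXub a1) (hYlb b1) (hYub b1) hp1
  have l4 : (b1:ℕ) ≤ (a2:ℕ) :=
    slotLe17 (hYlb b1) (hYub b1) (hXlb a2) (hXub a2) (by linarith)
  have l5 : (a2:ℕ) ≤ (b2:ℕ) := slotLe17 (hXlb a2) (hXub a2) (hYlb b2) (hYub b2) hp2
  have n1 : (a0:ℕ) ≠ (a1:ℕ) := by
    intro he
    have h : a0 = a1 := Fin.ext he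
    rw [h] at hp0
    linarith
  have n2 : (a1:ℕ) ≠ (a2:ℕ) := by
    intro he
    have h : a1 = a2 := Fin.ext he
    rw [h] at hp1
    linarith
  have nb1 : (b1:ℕ) ≠ (a2:ℕ) := by
    intro he
    have h : b1 = a2 := Fin.ext he
    rw [h] at hg1
    have := hXY a2
    linarith
  have nb0 : (b0:ℕ) ≠ (a1:ℕ) := by
    intro he
    have h : b0 = a1 := Fin.ext he
    rw [h] at hg0
    have := hXY a1
    linarith
  have i0 := a0.isLt
  have i1 := a1.isLt
  have i2 := a2.isLt
  have j0 := b0.isLt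
  have j1 := b1.isLt
  have j2 := b2.isLt
  refine ⟨Fin.ext ?_, Fin.ext ?_, Fin.ext ?_, Fin.ext ?_, Fin.ext ?_, Fin.ext ?_⟩ <;>
    · simp only [Fin.val_zero, Fin.val_one, Fin.val_two]
      omega

/-- The canonical `x`-value of slot `j` of block `t`. -/
noncomputable def XVd (ν' : MVar m → ℝ≥0) (t : ℕ) (j : Fin 3) : ℝ :=
  if t = 0 then 3*((j:ℕ):ℝ)
  else if h : t - 1 < m then (ν' (.xc ⟨t-1, h⟩ j) : ℝ)
  else 14*((m:ℝ)+1)+3*((j:ℕ):ℝ)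

/-- The canonical `y`-value of slot `j` of block `t`. -/
noncomputable def YVd (ν' : MVar m → ℝ≥0) (t : ℕ) (j : Fin 3) : ℝ :=
  if t = 0 then 3*((j:ℕ):ℝ)
  else if h : t - 1 < m then (ν' (.yc ⟨t-1, h⟩ j) : ℝ)
  else 14*((m:ℝ)+1)+3*((j:ℕ):ℝ)+2

lemma XVd_zero (ν' : MVar m → ℝ≥0) (j : Fin 3) : XVd ν' 0 j = 3*((j:ℕ):ℝ) := by
  unfold XVd
  rw [if_pos rfl]

lemma YVd_zero (ν' : MVar m → ℝ≥0) (j : Fin 3) : YVd ν' 0 j = 3*((j:ℕ):ℝ) := by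
  unfold YVd
  rw [if_pos rfl]

lemma XVd_mid (ν' : MVar m → ℝ≥0) (t : ℕ) (j : Fin 3) (h1 : t ≠ 0) (h2 : t - 1 < m) :
    XVd ν' t j = (ν' (.xc ⟨t-1, h2⟩ j) : ℝ) := by
  unfold XVd
  rw [if_neg h1, dif_pos h2]

lemma YVd_mid (ν' : MVar m → ℝ≥0) (t : ℕ) (j : Fin 3) (h1 : t ≠ 0) (h2 : t - 1 < m) :
    YVd ν' t j = (ν' (.yc ⟨t-1, h2⟩ j) : ℝ) := by
  unfold YVd
  rw [if_neg h1, dif_pos h2]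

lemma XVd_top (ν' : MVar m → ℝ≥0) (j : Fin 3) :
    XVd ν' (m+1) j = 14*((m:ℝ)+1)+3*((j:ℕ):ℝ) := by
  unfold XVd
  rw [if_neg (by omega), dif_neg (by omega)]

lemma YVd_top (ν' : MVar m → ℝ≥0) (j : Fin 3) :
    YVd ν' (m+1) j = 14*((m:ℝ)+1)+3*((j:ℕ):ℝ)+2 := by
  unfold YVd
  rw [if_neg (by omega), dif_neg (by omega)]

lemma XVd_bnds {ν' : MVar m → ℝ≥0} (hZ' : Z'phiSat m lits ν') {t : ℕ} (ht : t ≤ m+1)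
    (j : Fin 3) :
    14*(t:ℝ)+3*((j:ℕ):ℝ) ≤ XVd ν' t j ∧ XVd ν' t j ≤ 14*(t:ℝ)+3*((j:ℕ):ℝ)+2 := by
  rcases Nat.eq_zero_or_pos t with h0 | hpos
  · subst h0
    rw [XVd_zero]
    norm_num
  · by_cases hm : t - 1 < m
    · rw [XVd_mid ν' t j (by omega) hm]
      have h1 : 14 * (((t-1:ℕ):ℝ) + 1) + 3*((j:ℕ):ℝ) ≤ (ν' (.xc ⟨t-1,hm⟩ j) : ℝ) :=
        (hZ'.2.2.1 ⟨t-1,hm⟩ j).1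
      have h2 : (ν' (.xc ⟨t-1,hm⟩ j) : ℝ) ≤ 14 * (((t-1:ℕ):ℝ) + 1) + 3*((j:ℕ):ℝ) + 2 :=
        (hZ'.2.2.1 ⟨t-1,hm⟩ j).2.1
      have hc2 : ((t-1:ℕ):ℝ) = (t:ℝ) - 1 := by
        rw [Nat.cast_sub hpos]
        norm_num
      rw [hc2] at h1 h2
      constructor <;> linarith
    · have ht1 : t = m+1 := by omega
      subst ht1
      rw [XVd_top]
      push_cast
      constructor <;> linarith

lemma YVd_bnds {ν' : MVar m → ℝ≥0} (hZ' : Z'phiSat m lits ν') {t : ℕ} (ht : t ≤ m+1)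
    (j : Fin 3) :
    14*(t:ℝ)+3*((j:ℕ):ℝ) ≤ YVd ν' t j ∧ YVd ν' t j ≤ 14*(t:ℝ)+3*((j:ℕ):ℝ)+2 := by
  rcases Nat.eq_zero_or_pos t with h0 | hpos
  · subst h0
    rw [YVd_zero]
    norm_num
  · by_cases hm : t - 1 < m
    · rw [YVd_mid ν' t j (by omega) hm]
      have h1 : 14 * (((t-1:ℕ):ℝ) + 1) + 3*((j:ℕ):ℝ) ≤ (ν' (.yc ⟨t-1,hm⟩ j) : ℝ) :=
        (hZ'.2.2.1 ⟨t-1,hm⟩ j).2.2.1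
      have h2 : (ν' (.yc ⟨t-1,hm⟩ j) : ℝ) ≤ 14 * (((t-1:ℕ):ℝ) + 1) + 3*((j:ℕ):ℝ) + 2 :=
        (hZ'.2.2.1 ⟨t-1,hm⟩ j).2.2.2.1
      have hc2 : ((t-1:ℕ):ℝ) = (t:ℝ) - 1 := by
        rw [Nat.cast_sub hpos]
        norm_num
      rw [hc2] at h1 h2
      constructor <;> linarith
    · have ht1 : t = m+1 := by omega
      subst ht1
      rw [YVd_top]
      push_cast
      constructor <;> linarith

lemma XVd_le_YVd {ν' : MVar m → ℝ≥0} (hZ' : Z'phiSat m lits ν') {t : ℕ} (ht : t ≤ m+1)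
    (j : Fin 3) : XVd ν' t j ≤ YVd ν' t j := by
  rcases Nat.eq_zero_or_pos t with h0 | hpos
  · subst h0
    rw [XVd_zero, YVd_zero]
  · by_cases hm : t - 1 < m
    · rw [XVd_mid ν' t j (by omega) hm, YVd_mid ν' t j (by omega) hm]
      exact (hZ'.2.2.1 ⟨t-1,hm⟩ j).2.2.2.2
    · have ht1 : t = m+1 := by omega
      subst ht1
      rw [XVd_top, YVd_top]
      linarith

lemma XVd_blk {ν' : MVar m → ℝ≥0} (hZ' : Z'phiSat m lits ν') {t : ℕ} (ht : t ≤ m+1)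
    (j : Fin 3) : 14*(t:ℝ) ≤ XVd ν' t j ∧ XVd ν' t j ≤ 14*(t:ℝ)+8 := by
  obtain ⟨h1, h2⟩ := XVd_bnds hZ' ht j
  have hs : ((j:ℕ):ℝ) ≤ 2 := by exact_mod_cast Nat.lt_succ_iff.mp j.isLt
  have hs0 : (0:ℝ) ≤ ((j:ℕ):ℝ) := Nat.cast_nonneg _
  constructor <;> linarith

lemma YVd_blk {ν' : MVar m → ℝ≥0} (hZ' : Z'phiSat m lits ν') {t : ℕ} (ht : t ≤ m+1)
    (j : Fin 3) : 14*(t:ℝ) ≤ YVd ν' t j ∧ YVd ν' t j ≤ 14*(t:ℝ)+8 := by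
  obtain ⟨h1, h2⟩ := YVd_bnds hZ' ht j
  have hs : ((j:ℕ):ℝ) ≤ 2 := by exact_mod_cast Nat.lt_succ_iff.mp j.isLt
  have hs0 : (0:ℝ) ≤ ((j:ℕ):ℝ) := Nat.cast_nonneg _
  constructor <;> linarith

lemma buildSubset {m k : ℕ} {γ' : Config XY} {h' : MVar m → XY × Option ℝ≥0}
    {ν1 : MVar m → ℝ≥0}
    (hloc1 : ∀ y ∈ Z'Vars m, (h' y).1 = y.loc)
    (hmem1 : ∀ y ∈ Z'Vars m, h' y ∈ γ')
    (hν1 : ∀ y ∈ Z'Vars m, (h' y).2 = some (ν1 y))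
    (fx fy gx gy : Fin 3 → MVar m)
    (hfx : ∀ j, ¬ (fx j).inZ ∧ (fx j).loc = XY.qx)
    (hfy : ∀ j, ¬ (fy j).inZ ∧ (fy j).loc = XY.qy)
    (hgx : ∀ j, ¬ (gx j).inZ ∧ (gx j).loc = XY.qx)
    (hgy : ∀ j, ¬ (gy j).inZ ∧ (gy j).loc = XY.qy)
    (hzphi : ZphiSat m k (fun z => match z with
        | .xp j => ν1 (fx j) | .yp j => ν1 (fy j)
        | .xm j => ν1 (gx j) | .ym j => ν1 (gy j) | _ => 0)) :
    ∃ γ'', γ'' ⊆ γ' ∧ ∃ h, MSat (ZVars m) (ZphiSat m k) γ'' h := by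
  classical
  refine ⟨(Finset.univ : Finset (Fin 3)).image (fun j => h' (fx j)) ∪
          (Finset.univ : Finset (Fin 3)).image (fun j => h' (fy j)) ∪
          (Finset.univ : Finset (Fin 3)).image (fun j => h' (gx j)) ∪
          (Finset.univ : Finset (Fin 3)).image (fun j => h' (gy j)), ?_,
         (fun z => match z with
            | .xp j => h' (fx j) | .yp j => h' (fy j)
            | .xm j => h' (gx j) | .ym j => h' (gy j)
            | _ => h' (fx 0)), ?_, ?_, ?_, _, ?_, hzphi⟩
  · intro s hs
    simp only [Finset.mem_union, Finset.mem_image, Finset.mem_univ, true_and] at hs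
    rcases hs with (((⟨j, rfl⟩ | ⟨j, rfl⟩) | ⟨j, rfl⟩) | ⟨j, rfl⟩)
    · exact hmem1 _ (hfx j).1
    · exact hmem1 _ (hfy j).1
    · exact hmem1 _ (hgx j).1
    · exact hmem1 _ (hgy j).1
  · intro y hy
    cases y with
    | px j => exact (hy : False).elim
    | py j => exact (hy : False).elim
    | nx j => exact (hy : False).elim
    | ny j => exact (hy : False).elim
    | xc a b => exact (hy : False).elim
    | yc a b => exact (hy : False).elim
    | xp j => exact (hloc1 _ (hfx j).1).trans (hfx j).2
    | yp j => exact (hloc1 _ (hfy j).1).trans (hfy j).2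
    | xm j => exact (hloc1 _ (hgx j).1).trans (hgx j).2
    | ym j => exact (hloc1 _ (hgy j).1).trans (hgy j).2
  · intro y hy
    cases y with
    | px j => exact (hy : False).elim
    | py j => exact (hy : False).elim
    | nx j => exact (hy : False).elim
    | ny j => exact (hy : False).elim
    | xc a b => exact (hy : False).elim
    | yc a b => exact (hy : False).elim
    | xp j => exact Finset.mem_union_left _ (Finset.mem_union_left _ (Finset.mem_union_left _ (Finset.mem_image_of_mem _ (Finset.mem_univ j))))
    | yp j => exact Finset.mem_union_left _ (Finset.mem_union_left _ (Finset.mem_union_right _ (Finset.mem_image_of_mem _ (Finset.mem_univ j))))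
    | xm j => exact Finset.mem_union_left _ (Finset.mem_union_right _ (Finset.mem_image_of_mem _ (Finset.mem_univ j)))
    | ym j => exact Finset.mem_union_right _ (Finset.mem_image_of_mem _ (Finset.mem_univ j))
  · intro s hs
    simp only [Finset.mem_union, Finset.mem_image, Finset.mem_univ, true_and] at hs
    rcases hs with (((⟨j, rfl⟩ | ⟨j, rfl⟩) | ⟨j, rfl⟩) | ⟨j, rfl⟩)
    · exact ⟨.xp j, trivial, rfl⟩
    · exact ⟨.yp j, trivial, rfl⟩
    · exact ⟨.xm j, trivial, rfl⟩
    · exact ⟨.ym j, trivial, rfl⟩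
  · intro y hy
    cases y with
    | px j => exact (hy : False).elim
    | py j => exact (hy : False).elim
    | nx j => exact (hy : False).elim
    | ny j => exact (hy : False).elim
    | xc a b => exact (hy : False).elim
    | yc a b => exact (hy : False).elim
    | xp j => exact hν1 _ (hfx j).1
    | yp j => exact hν1 _ (hfy j).1
    | xm j => exact hν1 _ (hgx j).1
    | ym j => exact hν1 _ (hgy j).1

end Statement17Aux

/-! ## STATEMENT 17 -/

set_option maxHeartbeats 2000000 in
/-- For every `γ'` satisfying `(Z'_φ, ∅)` via `h'`, there is a
subset `γ'' ⊆ γ'` satisfying `(Z_φ, ∅)` iff `α_{γ'}` falsifies at least one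
clause of `φ`. -/
theorem statement17 {PV : Type*} (m k : ℕ) (hkm : k ≤ m)
    (lits : Fin m → Fin 3 → PV) (γ' : Config XY)
    (h' : MVar m → XY × Option ℝ≥0)
    (hsat : MSat (Z'Vars m) (Z'phiSat m lits) γ' h') :
    (∃ γ'', γ'' ⊆ γ' ∧ ∃ h, MSat (ZVars m) (ZphiSat m k) γ'' h) ↔
      ∃ i : Fin m, Falsifies k lits (alphaOf lits h') i := by
  obtain ⟨hloc1, hmem1, hsur1, ν1, hν1, hZ1⟩ := hsat
  have hsval : ∀ y : MVar m, ¬ MVar.inZ y → sval (h' y) = ((ν1 y : ℝ≥0) : ℝ) := by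
    intro y hy
    unfold sval
    rw [hν1 y hy]
    rfl
  have c0r : (((0 : Fin 3) : ℕ) : ℝ) = 0 := by norm_num
  have c2r : (((2 : Fin 3) : ℕ) : ℝ) = 2 := by norm_num
  constructor
  · rintro ⟨γ'', hsub, h, hM⟩
    obtain ⟨hloc2, hmem2, hsur2, ν2, hν2, hZ2⟩ := hM
    have g0 : 1 ≤ (ν2 (.xp 1) : ℝ) - ν2 (.yp 0) ∧ (ν2 (.xp 1) : ℝ) - ν2 (.yp 0) ≤ 5 := by
      have := hZ2.2.2.1 0
      simpa only [Fin.succ_zero_eq_one, Fin.castSucc_zero] using this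
    have g1 : 1 ≤ (ν2 (.xp 2) : ℝ) - ν2 (.yp 1) ∧ (ν2 (.xp 2) : ℝ) - ν2 (.yp 1) ≤ 5 := by
      have := hZ2.2.2.1 1
      simpa only [Fin.succ_one_eq_two, Fin.castSucc_one] using this
    have gm0 : 1 ≤ (ν2 (.xm 1) : ℝ) - ν2 (.ym 0) ∧ (ν2 (.xm 1) : ℝ) - ν2 (.ym 0) ≤ 5 := by
      have := hZ2.2.2.2.1 0
      simpa only [Fin.succ_zero_eq_one, Fin.castSucc_zero] using this
    have gm1 : 1 ≤ (ν2 (.xm 2) : ℝ) - ν2 (.ym 1) ∧ (ν2 (.xm 2) : ℝ) - ν2 (.ym 1) ≤ 5 := by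
      have := hZ2.2.2.2.1 1
      simpa only [Fin.succ_one_eq_two, Fin.castSucc_one] using this
    have getw : ∀ z : MVar m, MVar.inZ z → ∃ w : MVar m, ¬ MVar.inZ w ∧
        MVar.loc w = MVar.loc z ∧ ((ν1 w : ℝ≥0) : ℝ) = ((ν2 z : ℝ≥0) : ℝ) := by
      intro z hz
      obtain ⟨w, hw, hwz⟩ := hsur1 (h z) (hsub (hmem2 z hz))
      refine ⟨w, hw, ?_, ?_⟩
      · have e1 := hloc1 w hw
        rw [hwz] at e1
        rw [← e1]
        exact hloc2 z hz
      · have e1 := hν1 w hw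
        rw [hwz, hν2 z hz] at e1
        have e2 := Option.some.inj e1
        exact_mod_cast e2.symm
    have xclass : ∀ w : MVar m, ¬ MVar.inZ w → MVar.loc w = XY.qx →
        ∃ t, t ≤ m+1 ∧ ∃ s : Fin 3, ((ν1 w : ℝ≥0) : ℝ) = XVd ν1 t s := by
      intro w hw hl
      cases w with
      | px j => exact ⟨0, by omega, j, by rw [XVd_zero]; exact (hZ1.1 j).1⟩
      | py j => simp [MVar.loc] at hl
      | nx j => exact ⟨m+1, le_refl _, j, by rw [XVd_top]; exact (hZ1.2.1 j).1⟩
      | ny j => simp [MVar.loc] at hl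
      | xc i j =>
          refine ⟨(i : ℕ)+1, by have := i.isLt; omega, j, ?_⟩
          have hlt : (i : ℕ)+1-1 < m := by have := i.isLt; omega
          rw [XVd_mid ν1 _ j (by omega) hlt,
            show (⟨(i : ℕ)+1-1, hlt⟩ : Fin m) = i from Fin.ext rfl]
      | yc i j => simp [MVar.loc] at hl
      | xp j => exact absurd trivial hw
      | yp j => exact absurd trivial hw
      | xm j => exact absurd trivial hw
      | ym j => exact absurd trivial hw
    have yclass : ∀ w : MVar m, ¬ MVar.inZ w → MVar.loc w = XY.qy →
        ∃ t, t ≤ m+1 ∧ ∃ s : Fin 3, ((ν1 w : ℝ≥0) : ℝ) = YVd ν1 t s := by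
      intro w hw hl
      cases w with
      | py j => exact ⟨0, by omega, j, by rw [YVd_zero]; exact (hZ1.1 j).2⟩
      | px j => simp [MVar.loc] at hl
      | ny j => exact ⟨m+1, le_refl _, j, by rw [YVd_top]; exact (hZ1.2.1 j).2⟩
      | nx j => simp [MVar.loc] at hl
      | yc i j =>
          refine ⟨(i : ℕ)+1, by have := i.isLt; omega, j, ?_⟩
          have hlt : (i : ℕ)+1-1 < m := by have := i.isLt; omega
          rw [YVd_mid ν1 _ j (by omega) hlt,
            show (⟨(i : ℕ)+1-1, hlt⟩ : Fin m) = i from Fin.ext rfl]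
      | xc i j => simp [MVar.loc] at hl
      | xp j => exact absurd trivial hw
      | yp j => exact absurd trivial hw
      | xm j => exact absurd trivial hw
      | ym j => exact absurd trivial hw
    have hxv : ∀ j : Fin 3, ∃ t, t ≤ m+1 ∧ ∃ s : Fin 3, ((ν2 (.xp j) : ℝ≥0) : ℝ) = XVd ν1 t s := by
      intro j
      obtain ⟨w, hw, hwl, hwv⟩ := getw (.xp j) trivial
      obtain ⟨t, ht, s, hv⟩ := xclass w hw (hwl.trans rfl)
      exact ⟨t, ht, s, by rw [← hwv]; exact hv⟩
    have hyv : ∀ j : Fin 3, ∃ t, t ≤ m+1 ∧ ∃ s : Fin 3, ((ν2 (.yp j) : ℝ≥0) : ℝ) = YVd ν1 t s := by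
      intro j
      obtain ⟨w, hw, hwl, hwv⟩ := getw (.yp j) trivial
      obtain ⟨t, ht, s, hv⟩ := yclass w hw (hwl.trans rfl)
      exact ⟨t, ht, s, by rw [← hwv]; exact hv⟩
    have hxmv : ∀ j : Fin 3, ∃ t, t ≤ m+1 ∧ ∃ s : Fin 3, ((ν2 (.xm j) : ℝ≥0) : ℝ) = XVd ν1 t s := by
      intro j
      obtain ⟨w, hw, hwl, hwv⟩ := getw (.xm j) trivial
      obtain ⟨t, ht, s, hv⟩ := xclass w hw (hwl.trans rfl)
      exact ⟨t, ht, s, by rw [← hwv]; exact hv⟩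
    have hymv : ∀ j : Fin 3, ∃ t, t ≤ m+1 ∧ ∃ s : Fin 3, ((ν2 (.ym j) : ℝ≥0) : ℝ) = YVd ν1 t s := by
      intro j
      obtain ⟨w, hw, hwl, hwv⟩ := getw (.ym j) trivial
      obtain ⟨t, ht, s, hv⟩ := yclass w hw (hwl.trans rfl)
      exact ⟨t, ht, s, by rw [← hwv]; exact hv⟩
    obtain ⟨tx0, htx0, ax0, ex0⟩ := hxv 0
    obtain ⟨tx1, htx1, ax1, ex1⟩ := hxv 1
    obtain ⟨tx2, htx2, ax2, ex2⟩ := hxv 2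
    obtain ⟨ty0, hty0, ay0, ey0⟩ := hyv 0
    obtain ⟨ty1, hty1, ay1, ey1⟩ := hyv 1
    obtain ⟨ty2, hty2, ay2, ey2⟩ := hyv 2
    obtain ⟨tu0, hu0, cu0, eu0⟩ := hxmv 0
    obtain ⟨tu1, hu1, cu1, eu1⟩ := hxmv 1
    obtain ⟨tu2, hu2, cu2, eu2⟩ := hxmv 2
    obtain ⟨tv0, hv0, dv0, ev0⟩ := hymv 0
    obtain ⟨tv1, hv1, dv1, ev1⟩ := hymv 1
    obtain ⟨tv2, hv2, dv2, ev2⟩ := hymv 2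
    have BX0 := XVd_blk hZ1 htx0 ax0; rw [← ex0] at BX0
    have BX1 := XVd_blk hZ1 htx1 ax1; rw [← ex1] at BX1
    have BX2 := XVd_blk hZ1 htx2 ax2; rw [← ex2] at BX2
    have BY0 := YVd_blk hZ1 hty0 ay0; rw [← ey0] at BY0
    have BY1 := YVd_blk hZ1 hty1 ay1; rw [← ey1] at BY1
    have BY2 := YVd_blk hZ1 hty2 ay2; rw [← ey2] at BY2
    have BU0 := XVd_blk hZ1 hu0 cu0; rw [← eu0] at BU0
    have BU1 := XVd_blk hZ1 hu1 cu1; rw [← eu1] at BU1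
    have BU2 := XVd_blk hZ1 hu2 cu2; rw [← eu2] at BU2
    have BV0 := YVd_blk hZ1 hv0 dv0; rw [← ev0] at BV0
    have BV1 := YVd_blk hZ1 hv1 dv1; rw [← ev1] at BV1
    have BV2 := YVd_blk hZ1 hv2 dv2; rw [← ev2] at BV2
    have E1 : tx0 = ty0 :=
      blockEq17 BX0.1 BX0.2 BY0.1 BY0.2 (hZ2.1 0).1 (by linarith [(hZ2.1 0).2])
    have E2 : ty0 = tx1 :=
      blockEq17 BY0.1 BY0.2 BX1.1 BX1.2 (by linarith [g0.1]) g0.2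
    have E3 : tx1 = ty1 :=
      blockEq17 BX1.1 BX1.2 BY1.1 BY1.2 (hZ2.1 1).1 (by linarith [(hZ2.1 1).2])
    have E4 : ty1 = tx2 :=
      blockEq17 BY1.1 BY1.2 BX2.1 BX2.2 (by linarith [g1.1]) g1.2
    have E5 : tx2 = ty2 :=
      blockEq17 BX2.1 BX2.2 BY2.1 BY2.2 (hZ2.1 2).1 (by linarith [(hZ2.1 2).2])
    have F1 : tu0 = tv0 :=
      blockEq17 BU0.1 BU0.2 BV0.1 BV0.2 (by linarith [(hZ2.2.1 0).1]) (by linarith [(hZ2.2.1 0).2])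
    have F2 : tv0 = tu1 :=
      blockEq17 BV0.1 BV0.2 BU1.1 BU1.2 (by linarith [gm0.1]) gm0.2
    have F3 : tu1 = tv1 :=
      blockEq17 BU1.1 BU1.2 BV1.1 BV1.2 (by linarith [(hZ2.2.1 1).1]) (by linarith [(hZ2.2.1 1).2])
    have F4 : tv1 = tu2 :=
      blockEq17 BV1.1 BV1.2 BU2.1 BU2.2 (by linarith [gm1.1]) gm1.2
    have F5 : tu2 = tv2 :=
      blockEq17 BU2.1 BU2.2 BV2.1 BV2.2 (by linarith [(hZ2.2.1 2).1]) (by linarith [(hZ2.2.1 2).2])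
    have ey0' : ((ν2 (.yp 0) : ℝ≥0) : ℝ) = YVd ν1 tx0 ay0 := by rw [E1]; exact ey0
    have ex1' : ((ν2 (.xp 1) : ℝ≥0) : ℝ) = XVd ν1 tx0 ax1 := by rw [E1, E2]; exact ex1
    have ey1' : ((ν2 (.yp 1) : ℝ≥0) : ℝ) = YVd ν1 tx0 ay1 := by rw [E1, E2, E3]; exact ey1
    have ex2' : ((ν2 (.xp 2) : ℝ≥0) : ℝ) = XVd ν1 tx0 ax2 := by rw [E1, E2, E3, E4]; exact ex2
    have ey2' : ((ν2 (.yp 2) : ℝ≥0) : ℝ) = YVd ν1 tx0 ay2 := by rw [E1, E2, E3, E4, E5]; exact ey2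
    have ev0' : ((ν2 (.ym 0) : ℝ≥0) : ℝ) = YVd ν1 tu0 dv0 := by rw [F1]; exact ev0
    have eu1' : ((ν2 (.xm 1) : ℝ≥0) : ℝ) = XVd ν1 tu0 cu1 := by rw [F1, F2]; exact eu1
    have ev1' : ((ν2 (.ym 1) : ℝ≥0) : ℝ) = YVd ν1 tu0 dv1 := by rw [F1, F2, F3]; exact ev1
    have eu2' : ((ν2 (.xm 2) : ℝ≥0) : ℝ) = XVd ν1 tu0 cu2 := by rw [F1, F2, F3, F4]; exact eu2
    have ev2' : ((ν2 (.ym 2) : ℝ≥0) : ℝ) = YVd ν1 tu0 dv2 := by rw [F1, F2, F3, F4, F5]; exact ev2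
    obtain ⟨hA0, hA1, hA2, hB0, hB1, hB2⟩ :=
      chain317 (fun s => (XVd_bnds hZ1 htx0 s).1) (fun s => (XVd_bnds hZ1 htx0 s).2)
        (fun s => (YVd_bnds hZ1 htx0 s).1) (fun s => (YVd_bnds hZ1 htx0 s).2)
        (fun s => XVd_le_YVd hZ1 htx0 s) ax0 ax1 ax2 ay0 ay1 ay2
        (by rw [← ex0, ← ey0']; linarith [(hZ2.1 0).1])
        (by rw [← ex1', ← ey1']; linarith [(hZ2.1 1).1])
        (by rw [← ex2', ← ey2']; linarith [(hZ2.1 2).1])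
        (by rw [← ey0', ← ex1']; linarith [g0.1])
        (by rw [← ey1', ← ex2']; linarith [g1.1])
    rw [hA0] at ex0; rw [hA1] at ex1'; rw [hA2] at ex2'
    rw [hB0] at ey0'; rw [hB1] at ey1'; rw [hB2] at ey2'
    obtain ⟨hC0, hC1, hC2, hD0, hD1, hD2⟩ :=
      chain317 (fun s => (XVd_bnds hZ1 hu0 s).1) (fun s => (XVd_bnds hZ1 hu0 s).2)
        (fun s => (YVd_bnds hZ1 hu0 s).1) (fun s => (YVd_bnds hZ1 hu0 s).2)
        (fun s => XVd_le_YVd hZ1 hu0 s) cu0 cu1 cu2 dv0 dv1 dv2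
        (by rw [← eu0, ← ev0']; linarith [(hZ2.2.1 0).1])
        (by rw [← eu1', ← ev1']; linarith [(hZ2.2.1 1).1])
        (by rw [← eu2', ← ev2']; linarith [(hZ2.2.1 2).1])
        (by rw [← ev0', ← eu1']; linarith [gm0.1])
        (by rw [← ev1', ← eu2']; linarith [gm1.1])
    rw [hC0] at eu0; rw [hC1] at eu1'; rw [hC2] at eu2'
    rw [hD0] at ev0'; rw [hD1] at ev1'; rw [hD2] at ev2'
    have d0 : YVd ν1 tx0 0 - XVd ν1 tx0 0 ≤ 1 := by
      rw [← ex0, ← ey0']; linarith [(hZ2.1 0).2]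
    have d1 : YVd ν1 tx0 1 - XVd ν1 tx0 1 ≤ 1 := by
      rw [← ex1', ← ey1']; linarith [(hZ2.1 1).2]
    have d2 : YVd ν1 tx0 2 - XVd ν1 tx0 2 ≤ 1 := by
      rw [← ex2', ← ey2']; linarith [(hZ2.1 2).2]
    have dm0 : 1 < YVd ν1 tu0 0 - XVd ν1 tu0 0 := by
      rw [← eu0, ← ev0']; linarith [(hZ2.2.1 0).1]
    have dm1 : 1 < YVd ν1 tu0 1 - XVd ν1 tu0 1 := by
      rw [← eu1', ← ev1']; linarith [(hZ2.2.1 1).1]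
    have dm2 : 1 < YVd ν1 tu0 2 - XVd ν1 tu0 2 := by
      rw [← eu2', ← ev2']; linarith [(hZ2.2.1 2).1]
    have hTp : tx0 ≤ k := by
      have h5 := hZ2.2.2.2.2.1
      have hb : 14*(tx0:ℝ) ≤ ((ν2 (.yp 2) : ℝ≥0) : ℝ) := by
        rw [ey2']
        exact (YVd_blk hZ1 htx0 2).1
      have hr : (tx0:ℝ) < (k:ℝ)+1 := by linarith
      have hr2 : tx0 < k+1 := by exact_mod_cast hr
      omega
    have hTm : k+1 ≤ tu0 := by
      have h6 := hZ2.2.2.2.2.2.1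
      have hb : ((ν2 (.xm 0) : ℝ≥0) : ℝ) ≤ 14*(tu0:ℝ)+8 := by
        rw [eu0]
        exact (XVd_blk hZ1 hu0 0).2
      have hr : (k:ℝ) < (tu0:ℝ) := by linarith
      have hr2 : k < tu0 := by exact_mod_cast hr
      omega
    by_cases hc : tu0 ≤ m
    · have hlt : tu0 - 1 < m := by omega
      refine ⟨⟨tu0-1, hlt⟩, ?_⟩
      unfold Falsifies
      have hval : ((⟨tu0-1, hlt⟩ : Fin m) : ℕ) = tu0-1 := rfl
      rw [hval, if_neg (by omega)]
      intro j
      unfold alphaOf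
      refine ⟨⟨tu0-1, hlt⟩, j, rfl, ?_⟩
      rw [hsval (MVar.yc ⟨tu0-1, hlt⟩ j) (fun hh => hh),
        hsval (MVar.xc ⟨tu0-1, hlt⟩ j) (fun hh => hh)]
      rw [← YVd_mid ν1 tu0 j (by omega) hlt, ← XVd_mid ν1 tu0 j (by omega) hlt]
      fin_cases j
      · exact dm0
      · exact dm1
      · exact dm2
    · have htc : tu0 = m+1 := by omega
      by_cases hp : tx0 = 0
      · exfalso
        have hx0 : ((ν2 (.xp 0) : ℝ≥0) : ℝ) = 0 := by
          rw [ex0, hp, XVd_zero, c0r]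
          ring
        have hy2 : ((ν2 (.ym 2) : ℝ≥0) : ℝ) = 14*((m:ℝ)+1)+8 := by
          rw [ev2', htc, YVd_top, c2r]
          ring
        have h7 := hZ2.2.2.2.2.2.2
        rw [hx0, hy2] at h7
        linarith
      · have hk1 : 1 ≤ tx0 := by omega
        have hlt : tx0 - 1 < m := by omega
        refine ⟨⟨tx0-1, hlt⟩, ?_⟩
        unfold Falsifies
        have hval : ((⟨tx0-1, hlt⟩ : Fin m) : ℕ) = tx0-1 := rfl
        rw [hval, if_pos (by omega)]
        intro j hal
        unfold alphaOf at hal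
        obtain ⟨i', j', hl, hgt⟩ := hal
        rw [hsval (MVar.yc i' j') (fun hh => hh),
          hsval (MVar.xc i' j') (fun hh => hh)] at hgt
        have hcons := hZ1.2.2.2 i' ⟨tx0-1, hlt⟩ j' j hl
        have hdj : YVd ν1 tx0 j - XVd ν1 tx0 j ≤ 1 := by
          fin_cases j
          · exact d0
          · exact d1
          · exact d2
        rw [YVd_mid ν1 tx0 j (by omega) hlt, XVd_mid ν1 tx0 j (by omega) hlt] at hdj
        linarith [hcons.1, hcons.2]
  · rintro ⟨i, hfi⟩
    unfold Falsifies at hfi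
    by_cases hik : (i : ℕ) < k
    · rw [if_pos hik] at hfi
      unfold alphaOf at hfi
      have hd : ∀ j : Fin 3, ((ν1 (.yc i j) : ℝ≥0) : ℝ) - ν1 (.xc i j) ≤ 1 := by
        intro j
        by_contra hgt
        push_neg at hgt
        refine hfi j ⟨i, j, rfl, ?_⟩
        rw [hsval (MVar.yc i j) (fun hh => hh), hsval (MVar.xc i j) (fun hh => hh)]
        linarith
      have hzphi : ZphiSat m k (fun z : MVar m => match z with
          | .xp j => ν1 (.xc i j) | .yp j => ν1 (.yc i j)
          | .xm j => ν1 (.nx j) | .ym j => ν1 (.ny j) | _ => 0) := by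
        refine ⟨?_, ?_, ?_, ?_, ?_, ?_, ?_⟩
        · intro j
          show 0 ≤ ((ν1 (.yc i j) : ℝ≥0) : ℝ) - ν1 (.xc i j) ∧
            ((ν1 (.yc i j) : ℝ≥0) : ℝ) - ν1 (.xc i j) ≤ 1
          exact ⟨by linarith [(hZ1.2.2.1 i j).2.2.2.2], hd j⟩
        · intro j
          show 1 < ((ν1 (.ny j) : ℝ≥0) : ℝ) - ν1 (.nx j) ∧
            ((ν1 (.ny j) : ℝ≥0) : ℝ) - ν1 (.nx j) ≤ 2
          have h1 := (hZ1.2.1 j).1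
          have h2 := (hZ1.2.1 j).2
          constructor <;> linarith
        · intro j
          show 1 ≤ ((ν1 (.xc i j.succ) : ℝ≥0) : ℝ) - ν1 (.yc i j.castSucc) ∧
            ((ν1 (.xc i j.succ) : ℝ≥0) : ℝ) - ν1 (.yc i j.castSucc) ≤ 5
          have h1 := (hZ1.2.2.1 i j.succ).1
          have h2 := (hZ1.2.2.1 i j.succ).2.1
          have h3 := (hZ1.2.2.1 i j.castSucc).2.2.1
          have h4 := (hZ1.2.2.1 i j.castSucc).2.2.2.1
          have e3 : ((j.succ : ℕ) : ℝ) = ((j.castSucc : ℕ) : ℝ) + 1 := by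
            push_cast [Fin.val_succ, Fin.coe_castSucc]
            ring
          constructor <;> linarith
        · intro j
          show 1 ≤ ((ν1 (.nx j.succ) : ℝ≥0) : ℝ) - ν1 (.ny j.castSucc) ∧
            ((ν1 (.nx j.succ) : ℝ≥0) : ℝ) - ν1 (.ny j.castSucc) ≤ 5
          have h1 := (hZ1.2.1 j.succ).1
          have h2 := (hZ1.2.1 j.castSucc).2
          have e3 : ((j.succ : ℕ) : ℝ) = ((j.castSucc : ℕ) : ℝ) + 1 := by
            push_cast [Fin.val_succ, Fin.coe_castSucc]
            ring
          constructor <;> linarith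
        · show ((ν1 (.yc i 2) : ℝ≥0) : ℝ) < 14*((k:ℝ)+1) - 2
          have h1 := (hZ1.2.2.1 i 2).2.2.2.1
          rw [c2r] at h1
          have hik' : ((i : ℕ) : ℝ) + 1 ≤ (k:ℝ) := by exact_mod_cast Nat.succ_le_of_lt hik
          linarith
        · show ((ν1 (.nx 0) : ℝ≥0) : ℝ) > 14*((k:ℝ)+1) - 2
          have h1 := (hZ1.2.1 0).1
          rw [c0r] at h1
          have hkm' : (k:ℝ) ≤ (m:ℝ) := Nat.cast_le.mpr hkm
          linarith
        · show ((ν1 (.ny 2) : ℝ≥0) : ℝ) - ν1 (.xc i 0) < 14*((m:ℝ)+2) - 6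
          have h1 := (hZ1.2.1 2).2
          rw [c2r] at h1
          have h2 := (hZ1.2.2.1 i 0).1
          rw [c0r] at h2
          have h3 : (0:ℝ) ≤ ((i : ℕ) : ℝ) := Nat.cast_nonneg _
          linarith
      exact buildSubset hloc1 hmem1 hν1 (fun j => .xc i j) (fun j => .yc i j)
        (fun j => .nx j) (fun j => .ny j)
        (fun j => ⟨fun hh => hh, rfl⟩) (fun j => ⟨fun hh => hh, rfl⟩)
        (fun j => ⟨fun hh => hh, rfl⟩) (fun j => ⟨fun hh => hh, rfl⟩) hzphi
    · rw [if_neg hik] at hfi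
      unfold alphaOf at hfi
      have ht : ∀ j : Fin 3, 1 < ((ν1 (.yc i j) : ℝ≥0) : ℝ) - ν1 (.xc i j) := by
        intro j
        obtain ⟨i', j', hl, hgt⟩ := hfi j
        rw [hsval (MVar.yc i' j') (fun hh => hh),
          hsval (MVar.xc i' j') (fun hh => hh)] at hgt
        have hcons := hZ1.2.2.2 i' i j' j hl
        linarith [hcons.1, hcons.2]
      have hzphi : ZphiSat m k (fun z : MVar m => match z with
          | .xp j => ν1 (.px j) | .yp j => ν1 (.py j)
          | .xm j => ν1 (.xc i j) | .ym j => ν1 (.yc i j) | _ => 0) := by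
        refine ⟨?_, ?_, ?_, ?_, ?_, ?_, ?_⟩
        · intro j
          show 0 ≤ ((ν1 (.py j) : ℝ≥0) : ℝ) - ν1 (.px j) ∧
            ((ν1 (.py j) : ℝ≥0) : ℝ) - ν1 (.px j) ≤ 1
          have h1 := (hZ1.1 j).1
          have h2 := (hZ1.1 j).2
          constructor <;> linarith
        · intro j
          show 1 < ((ν1 (.yc i j) : ℝ≥0) : ℝ) - ν1 (.xc i j) ∧
            ((ν1 (.yc i j) : ℝ≥0) : ℝ) - ν1 (.xc i j) ≤ 2
          have h1 := (hZ1.2.2.1 i j).1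
          have h2 := (hZ1.2.2.1 i j).2.2.2.1
          exact ⟨ht j, by linarith⟩
        · intro j
          show 1 ≤ ((ν1 (.px j.succ) : ℝ≥0) : ℝ) - ν1 (.py j.castSucc) ∧
            ((ν1 (.px j.succ) : ℝ≥0) : ℝ) - ν1 (.py j.castSucc) ≤ 5
          have h1 := (hZ1.1 j.succ).1
          have h2 := (hZ1.1 j.castSucc).2
          have e3 : ((j.succ : ℕ) : ℝ) = ((j.castSucc : ℕ) : ℝ) + 1 := by
            push_cast [Fin.val_succ, Fin.coe_castSucc]
            ring
          constructor <;> linarith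
        · intro j
          show 1 ≤ ((ν1 (.xc i j.succ) : ℝ≥0) : ℝ) - ν1 (.yc i j.castSucc) ∧
            ((ν1 (.xc i j.succ) : ℝ≥0) : ℝ) - ν1 (.yc i j.castSucc) ≤ 5
          have h1 := (hZ1.2.2.1 i j.succ).1
          have h2 := (hZ1.2.2.1 i j.succ).2.1
          have h3 := (hZ1.2.2.1 i j.castSucc).2.2.1
          have h4 := (hZ1.2.2.1 i j.castSucc).2.2.2.1
          have e3 : ((j.succ : ℕ) : ℝ) = ((j.castSucc : ℕ) : ℝ) + 1 := by
            push_cast [Fin.val_succ, Fin.coe_castSucc]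
            ring
          constructor <;> linarith
        · show ((ν1 (.py 2) : ℝ≥0) : ℝ) < 14*((k:ℝ)+1) - 2
          have h1 := (hZ1.1 2).2
          rw [c2r] at h1
          have h2 : (0:ℝ) ≤ (k:ℝ) := Nat.cast_nonneg _
          linarith
        · show ((ν1 (.xc i 0) : ℝ≥0) : ℝ) > 14*((k:ℝ)+1) - 2
          have h1 := (hZ1.2.2.1 i 0).1
          rw [c0r] at h1
          have h2 : (k:ℝ) ≤ ((i : ℕ) : ℝ) := by exact_mod_cast Nat.le_of_not_lt hik
          linarith
        · show ((ν1 (.yc i 2) : ℝ≥0) : ℝ) - ν1 (.px 0) < 14*((m:ℝ)+2) - 6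
          have h1 := (hZ1.2.2.1 i 2).2.2.2.1
          rw [c2r] at h1
          have h0 := (hZ1.1 0).1
          rw [c0r] at h0
          have him : ((i : ℕ) : ℝ) + 1 ≤ (m:ℝ) := by exact_mod_cast i.isLt
          linarith
      exact buildSubset hloc1 hmem1 hν1 (fun j => .px j) (fun j => .py j)
        (fun j => .xc i j) (fun j => .yc i j)
        (fun j => ⟨fun hh => hh, rfl⟩) (fun j => ⟨fun hh => hh, rfl⟩)
        (fun j => ⟨fun hh => hh, rfl⟩) (fun j => ⟨fun hh => hh, rfl⟩) hzphi

end ATAPaper
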